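/- Let k be an algebraically closed field of characteristic 0 and ζ ∈ k a primitive 3rd root of unity. Let the 2×2 braiding matrix be q_{11} = ζ, q_{12} = −1, q_{21} = 1, q_{22} = −1 (modular type br(2,a) with q = −1). Then for every λ₁, λ₂, λ₃ ∈ k, the quotient of the free algebra k⟨y_1,y_2⟩ by the two-sided ideal generated by y_1³ − λ₁, y_2² − λ₂, and [y_{112}, y_{12}]_c − λ₃ is a nontrivial algebra. -/

import Mathlib

namespace Br2aAux

variable {k : Type*} [Field k]

abbrev G : Type := Fin 3 × Fin 2

def sh3 : Fin 3 → Fin 3 := fun i => ⟨(i.1 + 1) % 3, Nat.mod_lt _ (by norm_num)⟩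
def sh2 : Fin 2 → Fin 2 := fun j => ⟨(j.1 + 1) % 2, Nat.mod_lt _ (by norm_num)⟩
def sA : G → G := fun p => (sh3 p.1, p.2)
def sB : G → G := fun p => (p.1, sh2 p.2)

def mono (f : G → G) (w : G → k) : Matrix G G k :=
  Matrix.of fun p q => if p = f q then w q else 0

lemma mono_mul (f g : G → G) (w v : G → k) :
    (mono f w) * (mono g v) = mono (f ∘ g) fun q => w (g q) * v q := by
  ext p q
  simp only [mono, Matrix.mul_apply, Matrix.of_apply]
  rw [Finset.sum_eq_single (g q)]
  · by_cases hpf : p = f (g q) <;> simp [hpf, Function.comp]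
  · intro r _ hr
    rw [if_neg hr, mul_zero]
  · intro h; exact absurd (Finset.mem_univ _) h

lemma mono_congr {f g : G → G} (w : G → k) (h : f = g) : mono f w = mono g w := by rw [h]

lemma mono_sub_smul (f : G → G) (w v : G → k) (c : k) :
    mono f w - c • mono f v = mono f fun q => w q - c * v q := by
  ext p q
  simp only [mono, Matrix.sub_apply, Matrix.smul_apply, Matrix.of_apply, smul_eq_mul]
  split <;> simp

lemma mono_id_eq (w : G → k) (a : k) (h : ∀ q, w q = a) :
    mono id w = algebraMap k (Matrix G G k) a := by
  ext p q
  rw [Matrix.algebraMap_matrix_apply]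
  simp only [mono, Matrix.of_apply, id_eq]
  by_cases hpq : p = q
  · subst hpq; simp [h p]
  · simp [hpq]

/-- Scalar data for a 6-dimensional monomial representation. -/
structure Sol (zz lam1 lam2 lam3 : k) : Type _ where
  x0 : k
  x1 : k
  x2 : k
  y0 : k
  y1 : k
  y2 : k
  b0 : k
  b1 : k
  b2 : k
  d0 : k
  d1 : k
  d2 : k
  hx : x0 * x1 * x2 = lam1
  hy : y0 * y1 * y2 = lam1
  hb0 : b0 * d0 = lam2
  hb1 : b1 * d1 = lam2
  hb2 : b2 * d2 = lam2
  hz00 : (x2*(x1*d1 + d2*y1) + zz*((x2*d2 + d0*y2)*y1))*(y0*b0 + b1*x0) + zz^2*((x2*d2 + d0*y2)*(y1*(y0*b0 + b1*x0) + zz*((y1*b1 + b2*x1)*x0))) = lam3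
  hz01 : (y2*(y1*b1 + b2*x1) + zz*((y2*b2 + b0*x2)*x1))*(x0*d0 + d1*y0) + zz^2*((y2*b2 + b0*x2)*(x1*(x0*d0 + d1*y0) + zz*((x1*d1 + d2*y1)*y0))) = lam3
  hz10 : (x0*(x2*d2 + d0*y2) + zz*((x0*d0 + d1*y0)*y2))*(y1*b1 + b2*x1) + zz^2*((x0*d0 + d1*y0)*(y2*(y1*b1 + b2*x1) + zz*((y2*b2 + b0*x2)*x1))) = lam3
  hz11 : (y0*(y2*b2 + b0*x2) + zz*((y0*b0 + b1*x0)*x2))*(x1*d1 + d2*y1) + zz^2*((y0*b0 + b1*x0)*(x2*(x1*d1 + d2*y1) + zz*((x2*d2 + d0*y2)*y1))) = lam3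
  hz20 : (x1*(x0*d0 + d1*y0) + zz*((x1*d1 + d2*y1)*y0))*(y2*b2 + b0*x2) + zz^2*((x1*d1 + d2*y1)*(y0*(y2*b2 + b0*x2) + zz*((y0*b0 + b1*x0)*x2))) = lam3
  hz21 : (y1*(y0*b0 + b1*x0) + zz*((y1*b1 + b2*x1)*x0))*(x2*d2 + d0*y2) + zz^2*((y1*b1 + b2*x1)*(x0*(x2*d2 + d0*y2) + zz*((x0*d0 + d1*y0)*y2))) = lam3

variable {zz lam1 lam2 lam3 : k}

/-- weight function for `A`. -/
def Sol.wA (s : Sol zz lam1 lam2 lam3) : G → k := fun p =>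
  if p.1 = 0 then (if p.2 = 0 then s.x0 else s.y0)
  else if p.1 = 1 then (if p.2 = 0 then s.x1 else s.y1)
  else (if p.2 = 0 then s.x2 else s.y2)

/-- weight function for `B`. -/
def Sol.wB (s : Sol zz lam1 lam2 lam3) : G → k := fun p =>
  if p.1 = 0 then (if p.2 = 0 then s.b0 else s.d0)
  else if p.1 = 1 then (if p.2 = 0 then s.b1 else s.d1)
  else (if p.2 = 0 then s.b2 else s.d2)

lemma keyA (s : Sol zz lam1 lam2 lam3) :
    (mono sA s.wA : Matrix G G k) ^ 3 = algebraMap k (Matrix G G k) lam1 := by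
  rw [pow_succ, pow_succ, pow_one, mono_mul, mono_mul,
    mono_congr _ (show (sA ∘ sA) ∘ sA = id by decide)]
  apply mono_id_eq
  intro q
  fin_cases q <;>
    simp only [sA, sB, sh3, sh2, Sol.wA, Sol.wB] <;>
    norm_num [Fin.ext_iff] <;>
    first | linear_combination s.hx | linear_combination s.hy


lemma keyB (s : Sol zz lam1 lam2 lam3) :
    (mono sB s.wB : Matrix G G k) ^ 2 = algebraMap k (Matrix G G k) lam2 := by
  rw [pow_succ, pow_one, mono_mul, mono_congr _ (show sB ∘ sB = id by decide)]
  apply mono_id_eq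
  intro q
  fin_cases q <;>
    simp only [sA, sB, sh3, sh2, Sol.wA, Sol.wB] <;>
    norm_num [Fin.ext_iff] <;>
    first | linear_combination s.hb0 | linear_combination s.hb1 | linear_combination s.hb2

lemma monoBA (w : G → k) : mono (sB ∘ sA) w = mono (sA ∘ sB) w := mono_congr _ (by decide)
lemma monoPA (w : G → k) : mono ((sA ∘ sB) ∘ sA) w = mono (sA ∘ (sA ∘ sB)) w :=
  mono_congr _ (by decide)
lemma monoTP (w : G → k) : mono ((sA ∘ (sA ∘ sB)) ∘ (sA ∘ sB)) w = mono id w :=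
  mono_congr _ (by decide)
lemma monoPT (w : G → k) : mono ((sA ∘ sB) ∘ (sA ∘ (sA ∘ sB))) w = mono id w :=
  mono_congr _ (by decide)

set_option maxHeartbeats 2000000 in
lemma keyZ (s : Sol zz lam1 lam2 lam3) :
    (mono sA s.wA * (mono sA s.wA * mono sB s.wB - (-1 : k) • (mono sB s.wB * mono sA s.wA))
      - (-zz) • ((mono sA s.wA * mono sB s.wB - (-1 : k) • (mono sB s.wB * mono sA s.wA)) * mono sA s.wA))
    * (mono sA s.wA * mono sB s.wB - (-1 : k) • (mono sB s.wB * mono sA s.wA))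
    - (-zz^2) • ((mono sA s.wA * mono sB s.wB - (-1 : k) • (mono sB s.wB * mono sA s.wA))
      * (mono sA s.wA * (mono sA s.wA * mono sB s.wB - (-1 : k) • (mono sB s.wB * mono sA s.wA))
        - (-zz) • ((mono sA s.wA * mono sB s.wB - (-1 : k) • (mono sB s.wB * mono sA s.wA)) * mono sA s.wA)))
    = algebraMap k (Matrix G G k) lam3 := by
  simp only [mono_mul, monoBA, mono_sub_smul, monoPA, monoTP, monoPT]
  apply mono_id_eq
  intro q
  fin_cases q
  all_goals
    simp only [Function.comp, Function.comp_apply, sA, sB, sh3, sh2, Prod.fst_zero,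
      Prod.snd_zero, Prod.fst_one, Prod.snd_one]
    norm_num [Fin.ext_iff]
    simp only [Sol.wA, Sol.wB]
    norm_num [Fin.ext_iff]
    first
      | linear_combination s.hz00
      | linear_combination s.hz01
      | linear_combination s.hz10
      | linear_combination s.hz11
      | linear_combination s.hz20
      | linear_combination s.hz21


lemma sol_exists [IsAlgClosed k] [CharZero k] (zz lam1 lam2 lam3 : k)
    (hz : zz ^ 2 + zz + 1 = 0) : Nonempty (Sol zz lam1 lam2 lam3) := by
  by_cases h1 : lam1 = 0
  · by_cases h2 : lam2 = 0
    · -- case 3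
      exact ⟨⟨0, 1, 1, lam3, 1, 0, 1, 0, 0, 0, 1, 1,
        by rw [h1]; ring, by rw [h1]; ring, by rw [h2]; ring, by rw [h2]; ring,
        by rw [h2]; ring,
        by linear_combination lam3 * hz,
        by linear_combination (-lam3 + 2*zz*lam3) * hz,
        by linear_combination (-lam3 + zz*lam3) * hz,
        by linear_combination (lam3 + zz*lam3) * hz,
        by linear_combination (2*zz*lam3) * hz,
        by ring⟩⟩
    · -- case 2 : lam1 = 0, lam2 ≠ 0
      have hw : lam2 * (lam3 / lam2) = lam3 := by field_simp
      set w := lam3 / lam2 with hwdef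
      exact ⟨⟨0, 1, 1, w, 1, 0, 1, 1, 1, lam2, lam2, lam2,
        by rw [h1]; ring, by rw [h1]; ring, by ring, by ring, by ring,
        by linear_combination (lam2*w) * hz + hw,
        by linear_combination (-lam2*w + 2*zz*lam2*w) * hz + hw,
        by linear_combination (-lam2*w + zz*lam2*w) * hz + hw,
        by linear_combination (lam2*w + zz*lam2*w) * hz + hw,
        by linear_combination (2*zz*lam2*w) * hz + hw,
        by linear_combination hw⟩⟩
  · -- case 1 : lam1 ≠ 0
    obtain ⟨u, v, huv, hv⟩ : ∃ u v : k, u * v = lam2 ∧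
        lam1 * v = lam3 - 2*(lam1*lam2) - lam1*lam2*u := by
      by_cases h2 : lam2 = 0
      · refine ⟨0, lam3 / lam1, by rw [h2]; ring, ?_⟩
        rw [h2]; field_simp; ring
      · obtain ⟨sq, hsq⟩ := IsAlgClosed.exists_pow_nat_eq
          ((lam3 - 2*(lam1*lam2))^2 - 4*(lam1*lam2)^2) (n := 2) (by norm_num)
        have h2' : (2 : k) ≠ 0 := two_ne_zero
        refine ⟨(lam3 - 2*(lam1*lam2) + sq) / (2*(lam1*lam2)),
                (lam3 - 2*(lam1*lam2) - sq) / (2*lam1), ?_, ?_⟩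
        · field_simp
          linear_combination -hsq
        · field_simp
          ring
    exact ⟨⟨lam1, 1, 1, lam1, 1, 1, 1, 1, u, lam2, lam2, v,
      by ring, by ring, by ring, by ring, huv,
      by linear_combination (lam1*v - lam1*u*v + lam1*lam2 - lam1*lam2*u + zz*lam1*v
          + zz*lam1*u*v + zz*lam1*lam2 + zz*lam1*lam2*u) * hz + lam1 * huv + hv,
      by linear_combination (-lam1*v - lam1*u*v + lam1*lam2 + lam1*lam2*u + zz*lam1*v
          + zz*lam1*u*v + zz*lam1*lam2 + zz*lam1*lam2*u) * hz + lam1 * huv + hv,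
      by linear_combination (2*zz*lam1*lam2 + 2*zz*lam1*lam2*u) * hz + lam1 * huv + hv,
      by linear_combination (2*zz*lam1*v + 2*zz*lam1*lam2) * hz + lam1 * huv + hv,
      by linear_combination (-lam1*v + lam1*u*v - lam1*lam2 + lam1*lam2*u + 2*zz*lam1*v
          + 2*zz*lam1*lam2) * hz + (-lam1) * huv + hv,
      by linear_combination (lam1*v + lam1*u*v - lam1*lam2 - lam1*lam2*u + 2*zz*lam1*lam2
          + 2*zz*lam1*lam2*u) * hz + (-lam1) * huv + hv⟩⟩

end Br2aAux

/-- The `q`-bilinear form `q(α,β) = ∏ i j, (q i j) ^ (α i * β j)` on `ℕⁿ`-degrees. -/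
noncomputable def qForm {k : Type*} [Field k] {n : ℕ} (q : Fin n → Fin n → k)
    (α β : Fin n → ℕ) : k :=
  ∏ i : Fin n, ∏ j : Fin n, q i j ^ (α i * β j)

/-- The braided commutator on pairs (homogeneous element, its `ℕⁿ`-degree):
`[u,v]_c = u v − q(deg u, deg v) v u`. -/
noncomputable def bc {k : Type*} [Field k] {n : ℕ} (q : Fin n → Fin n → k)
    (u v : FreeAlgebra k (Fin n) × (Fin n → ℕ)) :
    FreeAlgebra k (Fin n) × (Fin n → ℕ) :=
  (u.1 * v.1 - qForm q u.2 v.2 • (v.1 * u.1), fun i => u.2 i + v.2 i)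

/-- The generator `y i` of the free algebra, together with its degree `e_i`. -/
noncomputable def ygen (k : Type*) [Field k] {n : ℕ} (i : Fin n) :
    FreeAlgebra k (Fin n) × (Fin n → ℕ) :=
  (FreeAlgebra.ι k i, fun j => if j = i then 1 else 0)

theorem statement_9 {k : Type*} [Field k] [IsAlgClosed k] [CharZero k]
    (ζ : k) (hζ : IsPrimitiveRoot ζ 3)
    (lam₁ lam₂ lam₃ : k)
    (q : Fin 2 → Fin 2 → k) (hq : q = ![![ζ, -1], ![1, -1]]) :
    (1 : FreeAlgebra k (Fin 2)) ∉ TwoSidedIdeal.span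
      ({FreeAlgebra.ι k (0 : Fin 2) ^ 3 - algebraMap k (FreeAlgebra k (Fin 2)) lam₁,
        FreeAlgebra.ι k (1 : Fin 2) ^ 2 - algebraMap k (FreeAlgebra k (Fin 2)) lam₂,
        (bc q (bc q (ygen k 0) (bc q (ygen k 0) (ygen k 1))) (bc q (ygen k 0) (ygen k 1))).1 - algebraMap k (FreeAlgebra k (Fin 2)) lam₃} : Set (FreeAlgebra k (Fin 2))) := by
  intro hmem
  have hζ3 : ζ ^ 3 = 1 := hζ.pow_eq_one
  have hζne : ζ ≠ 1 := hζ.ne_one (by norm_num)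
  have hζ2 : ζ ^ 2 + ζ + 1 = 0 := by
    rcases mul_eq_zero.mp (show (ζ - 1) * (ζ ^ 2 + ζ + 1) = 0 by linear_combination hζ3)
      with h | h
    · exact absurd (sub_eq_zero.mp h) hζne
    · exact h
  obtain ⟨s⟩ := Br2aAux.sol_exists ζ lam₁ lam₂ lam₃ hζ2
  set A : Matrix Br2aAux.G Br2aAux.G k := Br2aAux.mono Br2aAux.sA s.wA with hA
  set B : Matrix Br2aAux.G Br2aAux.G k := Br2aAux.mono Br2aAux.sB s.wB with hB
  set φ : FreeAlgebra k (Fin 2) →ₐ[k] Matrix Br2aAux.G Br2aAux.G k :=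
    FreeAlgebra.lift k (fun i => if i = 0 then A else B) with hφ
  have hφ0 : φ (FreeAlgebra.ι k 0) = A := by rw [hφ, FreeAlgebra.lift_ι_apply]; simp
  have hφ1 : φ (FreeAlgebra.ι k 1) = B := by rw [hφ, FreeAlgebra.lift_ι_apply]; simp
  have c1 : qForm q (ygen k (0 : Fin 2)).2 (ygen k (1 : Fin 2)).2 = -1 := by
    subst hq
    norm_num [qForm, ygen, Fin.prod_univ_two]
  have c2 : qForm q (ygen k (0 : Fin 2)).2 (bc q (ygen k 0) (ygen k 1)).2 = -ζ := by
    subst hq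
    norm_num [qForm, ygen, bc, Fin.prod_univ_two]
  have c3 : qForm q (bc q (ygen k 0) (bc q (ygen k 0) (ygen k 1))).2
      (bc q (ygen k 0) (ygen k 1)).2 = -ζ ^ 2 := by
    subst hq
    norm_num [qForm, ygen, bc, Fin.prod_univ_two]
  have bc1 : ∀ a b : FreeAlgebra k (Fin 2) × (Fin 2 → ℕ),
      (bc q a b).1 = a.1 * b.1 - qForm q a.2 b.2 • (b.1 * a.1) := fun _ _ => rfl
  have yg0 : (ygen k (0 : Fin 2)).1 = FreeAlgebra.ι k 0 := rfl
  have yg1 : (ygen k (1 : Fin 2)).1 = FreeAlgebra.ι k 1 := rfl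
  rw [TwoSidedIdeal.mem_span_iff] at hmem
  have h1m := hmem (TwoSidedIdeal.ker φ) ?_
  · rw [TwoSidedIdeal.mem_ker, map_one] at h1m
    exact one_ne_zero h1m
  · intro g hg
    simp only [Set.mem_insert_iff, Set.mem_singleton_iff] at hg
    rw [SetLike.mem_coe, TwoSidedIdeal.mem_ker]
    rcases hg with rfl | rfl | rfl
    · rw [map_sub, map_pow, hφ0, AlgHom.commutes, Br2aAux.keyA s, sub_self]
    · rw [map_sub, map_pow, hφ1, AlgHom.commutes, Br2aAux.keyB s, sub_self]
    · rw [map_sub, AlgHom.commutes, sub_eq_zero]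
      simp only [bc1, yg0, yg1, c1, c2, c3]
      simp only [map_sub, map_mul, map_smul, hφ0, hφ1]
      exact Br2aAux.keyZ s
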